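/- Let v be a value function and let the weighting functions w⁻, w⁺ be continuously differentiable on [0,1] with strictly positive derivatives. Let ξ be a bounded random variable and a ∈ ℝ. If E_{w⁻w⁺}[v(ξ − a)] ≥ 0, then ρ_{(v,w⁻,w⁺)}(ξ) ≥ a. -/

import Mathlib

open MeasureTheory Set

noncomputable section

/-- A value function: strictly increasing `v : ℝ → ℝ` with `v 0 = 0`. -/
def IsValueFun (v : ℝ → ℝ) : Prop := StrictMono v ∧ v 0 = 0

/-- A weighting function: a strictly increasing `w : [0,1] → [0,1]`
with `w 0 = 0` and `w 1 = 1`. -/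
def IsWeightFun (w : ℝ → ℝ) : Prop :=
  StrictMonoOn w (Icc 0 1) ∧ MapsTo w (Icc 0 1) (Icc 0 1) ∧ w 0 = 0 ∧ w 1 = 1

/-- The CPT distorted expectation
`E_{w⁻w⁺}[v(ζ)] = ∫₀^∞ w⁺(ℙ(v(ζ) ≥ t)) dt − ∫₀^∞ w⁻(ℙ(v(ζ) ≤ −t)) dt`. -/
def cptE {Ω : Type*} [MeasurableSpace Ω] (P : Measure Ω)
    (v wm wp : ℝ → ℝ) (ζ : Ω → ℝ) : ℝ :=
  (∫ t in Ioi (0:ℝ), wp (P {ω | t ≤ v (ζ ω)}).toReal)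
    - ∫ t in Ioi (0:ℝ), wm (P {ω | v (ζ ω) ≤ -t}).toReal

/-- Both integrals defining the CPT distorted expectation are finite. -/
def CptWellDef {Ω : Type*} [MeasurableSpace Ω] (P : Measure Ω)
    (v wm wp : ℝ → ℝ) (ζ : Ω → ℝ) : Prop :=
  IntegrableOn (fun t => wp (P {ω | t ≤ v (ζ ω)}).toReal) (Ioi 0) ∧
    IntegrableOn (fun t => wm (P {ω | v (ζ ω) ≤ -t}).toReal) (Ioi 0)

/-- The generalized shortfall risk measure (GSR-CPT):
`ρ_{(v,w⁻,w⁺)}(ξ) = inf { x : E_{w⁻w⁺}[v(ξ − x)] ≤ 0 }`, with `inf ∅ = +∞`. -/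
def gsr {Ω : Type*} [MeasurableSpace Ω] (P : Measure Ω)
    (v wm wp : ℝ → ℝ) (ξ : Ω → ℝ) : EReal :=
  sInf ((fun x : ℝ => (x : EReal)) ''
    {x : ℝ | cptE P v wm wp (fun ω => ξ ω - x) ≤ 0})

/-- A bounded random variable. -/
def IsBddRV {Ω : Type*} [MeasurableSpace Ω] (ξ : Ω → ℝ) : Prop :=
  Measurable ξ ∧ ∃ M : ℝ, ∀ ω, |ξ ω| ≤ M

/-- A weighting function which is continuously differentiable on `[0,1]`
with strictly positive derivative. -/
def SmoothWeight (w : ℝ → ℝ) : Prop :=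
  IsWeightFun w ∧ ContDiffOn ℝ 1 w (Icc 0 1) ∧
    ∀ p ∈ Icc (0:ℝ) 1, 0 < derivWithin w (Icc 0 1) p

/-- An antitone function on `ℝ` with values in `[0,1]` vanishing beyond some
bound is integrable on `(0,∞)`. -/
lemma integrableOn_Ioi_of_antitone_of_bdd (g : ℝ → ℝ) (hg : Antitone g)
    (h0 : ∀ t, 0 ≤ g t) (h1 : ∀ t, g t ≤ 1) {B : ℝ} (hB : ∀ t, B < t → g t = 0) :
    IntegrableOn g (Ioi 0) := by
  set B' := max B 0 with hB'def
  have hB' : ∀ t, B' < t → g t = 0 := fun t ht =>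
    hB t (lt_of_le_of_lt (le_max_left _ _) ht)
  have hsplit : Ioi (0:ℝ) = Ioc 0 B' ∪ Ioi B' :=
    (Ioc_union_Ioi_eq_Ioi (le_max_right B 0)).symm
  rw [hsplit]
  apply IntegrableOn.union
  · apply Measure.integrableOn_of_bounded (M := 1) measure_Ioc_lt_top.ne
      hg.measurable.aestronglyMeasurable
    filter_upwards with t
    rw [Real.norm_eq_abs, abs_le]
    exact ⟨le_trans (by norm_num) (h0 t), h1 t⟩
  · exact (integrableOn_congr_fun (fun t ht => hB' t ht) measurableSet_Ioi).mpr
      integrableOn_zero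

/-- A smooth weighting function has a uniform positive lower bound on its slopes. -/
lemma smoothWeight_gap {w : ℝ → ℝ} (hw : SmoothWeight w) :
    ∃ κ > 0, ∀ p ∈ Icc (0:ℝ) 1, ∀ q ∈ Icc (0:ℝ) 1, q ≤ p →
      κ * (p - q) ≤ w p - w q := by
  obtain ⟨hwf, hcd, hpos⟩ := hw
  have hu : UniqueDiffOn ℝ (Icc (0:ℝ) 1) := uniqueDiffOn_Icc (by norm_num)
  have hcont : ContinuousOn (derivWithin w (Icc 0 1)) (Icc 0 1) :=
    hcd.continuousOn_derivWithin hu le_rfl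
  obtain ⟨p₀, hp₀, hmin⟩ :=
    isCompact_Icc.exists_isMinOn (nonempty_Icc.mpr (by norm_num)) hcont
  refine ⟨derivWithin w (Icc 0 1) p₀, hpos _ hp₀, ?_⟩
  intro p hp q hq hqp
  have hder : ∀ y ∈ interior (Icc (0:ℝ) 1),
      derivWithin w (Icc 0 1) p₀ ≤ deriv w y := by
    intro y hy
    have hyI : y ∈ Icc (0:ℝ) 1 := interior_subset hy
    have : derivWithin w (Icc 0 1) y = deriv w y := by
      rw [interior_Icc] at hy
      exact derivWithin_of_mem_nhds (Icc_mem_nhds hy.1 hy.2)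
    rw [← this]
    exact hmin hyI
  exact (convex_Icc (0:ℝ) 1).mul_sub_le_image_sub_of_le_deriv hcd.continuousOn
    ((hcd.differentiableOn one_ne_zero).mono interior_subset) hder q hq p hp hqp

/-- Layer cake: for a bounded measurable `Z` on a probability space,
`∫₀^∞ P(Z ≥ t) dt − ∫₀^∞ P(Z ≤ −t) dt = E[Z]`. -/
lemma tail_integral_eq {Ω : Type*} [MeasurableSpace Ω] (P : Measure Ω)
    [IsProbabilityMeasure P] (Z : Ω → ℝ) (hZ : Measurable Z) (B : ℝ)
    (hB : ∀ ω, |Z ω| ≤ B) :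
    (∫ t in Ioi (0:ℝ), (P {ω | t ≤ Z ω}).toReal)
      - (∫ t in Ioi (0:ℝ), (P {ω | Z ω ≤ -t}).toReal) = ∫ ω, Z ω ∂P := by
  have hint : Integrable Z P :=
    ⟨hZ.aestronglyMeasurable,
      HasFiniteIntegral.of_bounded (C := B)
        (Filter.Eventually.of_forall fun ω => by simpa using hB ω)⟩
  have hp : Integrable (fun ω => max (Z ω) 0) P := hint.pos_part
  have hm : Integrable (fun ω => max (-Z ω) 0) P := hint.neg_part
  have e1 : ∫ t in Ioi (0:ℝ), (P {ω | t ≤ Z ω}).toReal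
      = ∫ ω, max (Z ω) 0 ∂P := by
    rw [hp.integral_eq_integral_meas_le
      (Filter.Eventually.of_forall fun ω => le_max_right _ _)]
    refine setIntegral_congr_fun measurableSet_Ioi fun t ht => ?_
    have hset : {ω | t ≤ max (Z ω) 0} = {ω | t ≤ Z ω} := by
      ext ω
      simp only [mem_setOf_eq, le_max_iff]
      exact ⟨fun h => h.elim id fun h0 => absurd (lt_of_lt_of_le ht h0) (lt_irrefl 0),
        fun h => Or.inl h⟩
    rw [hset]; rfl
  have e2 : ∫ t in Ioi (0:ℝ), (P {ω | Z ω ≤ -t}).toReal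
      = ∫ ω, max (-Z ω) 0 ∂P := by
    rw [hm.integral_eq_integral_meas_le
      (Filter.Eventually.of_forall fun ω => le_max_right _ _)]
    refine setIntegral_congr_fun measurableSet_Ioi fun t ht => ?_
    have hset : {ω | t ≤ max (-Z ω) 0} = {ω | Z ω ≤ -t} := by
      ext ω
      simp only [mem_setOf_eq, le_max_iff]
      constructor
      · rintro (h | h)
        · linarith
        · exact absurd (lt_of_lt_of_le ht h) (lt_irrefl 0)
      · intro h; exact Or.inl (by linarith)
    rw [hset]; rfl
  rw [e1, e2, ← integral_sub hp hm]
  congr 1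
  funext ω
  exact max_zero_sub_max_neg_zero_eq_self (Z ω)

/-- if the weighting functions are continuously differentiable on
`[0,1]` with strictly positive derivatives, `ξ` is a bounded random variable
and `E_{w⁻w⁺}[v(ξ − a)] ≥ 0`, then `ρ_{(v,w⁻,w⁺)}(ξ) ≥ a`. -/
theorem gsr_lower_bound {Ω : Type*} [MeasurableSpace Ω] (P : Measure Ω)
    [IsProbabilityMeasure P]
    (v wm wp : ℝ → ℝ) (hv : IsValueFun v) (hwm : SmoothWeight wm)
    (hwp : SmoothWeight wp)
    (ξ : Ω → ℝ) (hξ : IsBddRV ξ) (a : ℝ)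
    (hE : 0 ≤ cptE P v wm wp (fun ω => ξ ω - a)) :
    (a : EReal) ≤ gsr P v wm wp ξ := by
  obtain ⟨hvm, hv0⟩ := hv
  obtain ⟨hξm, M, hM⟩ := hξ
  refine le_sInf ?_
  rintro y ⟨x, hx, rfl⟩
  rw [EReal.coe_le_coe_iff]
  by_contra hax
  push_neg at hax
  -- Notation for the tail probability functions
  set Fp : ℝ → ℝ → ℝ := fun c t => (P {ω | t ≤ v (ξ ω - c)}).toReal with hFpdef
  set Fm : ℝ → ℝ → ℝ := fun c t => (P {ω | v (ξ ω - c) ≤ -t}).toReal with hFmdef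
  have hFp01 : ∀ c t, Fp c t ∈ Icc (0:ℝ) 1 := fun c t =>
    ⟨ENNReal.toReal_nonneg,
      (ENNReal.toReal_mono ENNReal.one_ne_top prob_le_one).trans_eq ENNReal.toReal_one⟩
  have hFm01 : ∀ c t, Fm c t ∈ Icc (0:ℝ) 1 := fun c t =>
    ⟨ENNReal.toReal_nonneg,
      (ENNReal.toReal_mono ENNReal.one_ne_top prob_le_one).trans_eq ENNReal.toReal_one⟩
  have hFpanti : ∀ c, Antitone (Fp c) := by
    intro c s t hst
    exact ENNReal.toReal_mono (measure_ne_top P _)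
      (measure_mono fun ω hω => le_trans hst hω)
  have hFmanti : ∀ c, Antitone (Fm c) := by
    intro c s t hst
    exact ENNReal.toReal_mono (measure_ne_top P _)
      (measure_mono fun ω (hω : _ ≤ -t) =>
        show _ ≤ -s from le_trans hω (neg_le_neg hst))
  have hFp0 : ∀ c t, v (M - c) < t → Fp c t = 0 := by
    intro c t ht
    have : {ω | t ≤ v (ξ ω - c)} = ∅ := by
      ext ω
      simp only [mem_setOf_eq, mem_empty_iff_false, iff_false, not_le]
      exact lt_of_le_of_lt (hvm.monotone (by have := (abs_le.mp (hM ω)).2; linarith)) ht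
    simp [hFpdef, this]
  have hFm0 : ∀ c t, -v (-M - c) < t → Fm c t = 0 := by
    intro c t ht
    have : {ω | v (ξ ω - c) ≤ -t} = ∅ := by
      ext ω
      simp only [mem_setOf_eq, mem_empty_iff_false, iff_false, not_le]
      have h1 : v (-M - c) ≤ v (ξ ω - c) :=
        hvm.monotone (by have := (abs_le.mp (hM ω)).1; linarith)
      linarith
    simp [hFmdef, this]
  -- Integrability of all four integrands
  have hIFp : ∀ c, IntegrableOn (Fp c) (Ioi 0) := fun c =>
    integrableOn_Ioi_of_antitone_of_bdd _ (hFpanti c) (fun t => (hFp01 c t).1)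
      (fun t => (hFp01 c t).2) (hFp0 c)
  have hIFm : ∀ c, IntegrableOn (Fm c) (Ioi 0) := fun c =>
    integrableOn_Ioi_of_antitone_of_bdd _ (hFmanti c) (fun t => (hFm01 c t).1)
      (fun t => (hFm01 c t).2) (hFm0 c)
  have hwpmono : MonotoneOn wp (Icc 0 1) := hwp.1.1.monotoneOn
  have hwmmono : MonotoneOn wm (Icc 0 1) := hwm.1.1.monotoneOn
  have hwpmaps := hwp.1.2.1
  have hwmmaps := hwm.1.2.1
  have hwp0 : wp 0 = 0 := hwp.1.2.2.1
  have hwm0 : wm 0 = 0 := hwm.1.2.2.1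
  have hIp : ∀ c, IntegrableOn (fun t => wp (Fp c t)) (Ioi 0) := by
    intro c
    refine integrableOn_Ioi_of_antitone_of_bdd _
      (fun s t hst => hwpmono (hFp01 c t) (hFp01 c s) (hFpanti c hst))
      (fun t => (hwpmaps (hFp01 c t)).1) (fun t => (hwpmaps (hFp01 c t)).2)
      (B := v (M - c)) (fun t ht => by rw [hFp0 c t ht, hwp0])
  have hIm : ∀ c, IntegrableOn (fun t => wm (Fm c t)) (Ioi 0) := by
    intro c
    refine integrableOn_Ioi_of_antitone_of_bdd _
      (fun s t hst => hwmmono (hFm01 c t) (hFm01 c s) (hFmanti c hst))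
      (fun t => (hwmmaps (hFm01 c t)).1) (fun t => (hwmmaps (hFm01 c t)).2)
      (B := -v (-M - c)) (fun t ht => by rw [hFm0 c t ht, hwm0])
  -- Slope gaps
  obtain ⟨κp, hκp, hgapp⟩ := smoothWeight_gap hwp
  obtain ⟨κm, hκm, hgapm⟩ := smoothWeight_gap hwm
  set κ := min κp κm with hκdef
  have hκ : 0 < κ := lt_min hκp hκm
  -- Pointwise comparisons
  have hsetp : ∀ t, Fp a t ≤ Fp x t := by
    intro t
    exact ENNReal.toReal_mono (measure_ne_top P _)
      (measure_mono fun ω hω =>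
        le_trans hω (hvm.monotone (by linarith [le_of_lt hax])))
  have hsetm : ∀ t, Fm x t ≤ Fm a t := by
    intro t
    exact ENNReal.toReal_mono (measure_ne_top P _)
      (measure_mono fun ω hω =>
        le_trans (hvm.monotone (by linarith [le_of_lt hax])) hω)
  have h1 : ∀ t ∈ Ioi (0:ℝ),
      κ * (Fp x t - Fp a t) ≤ wp (Fp x t) - wp (Fp a t) := by
    intro t _
    refine le_trans ?_ (hgapp _ (hFp01 x t) _ (hFp01 a t) (hsetp t))
    exact mul_le_mul_of_nonneg_right (min_le_left _ _) (by linarith [hsetp t])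
  have h2 : ∀ t ∈ Ioi (0:ℝ),
      κ * (Fm a t - Fm x t) ≤ wm (Fm a t) - wm (Fm x t) := by
    intro t _
    refine le_trans ?_ (hgapm _ (hFm01 a t) _ (hFm01 x t) (hsetm t))
    exact mul_le_mul_of_nonneg_right (min_le_right _ _) (by linarith [hsetm t])
  -- Integral comparisons
  have I1 : κ * ((∫ t in Ioi (0:ℝ), Fp x t) - ∫ t in Ioi (0:ℝ), Fp a t)
      ≤ (∫ t in Ioi (0:ℝ), wp (Fp x t)) - ∫ t in Ioi (0:ℝ), wp (Fp a t) := by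
    calc κ * ((∫ t in Ioi (0:ℝ), Fp x t) - ∫ t in Ioi (0:ℝ), Fp a t)
        = ∫ t in Ioi (0:ℝ), κ * (Fp x t - Fp a t) := by
          rw [integral_const_mul, integral_sub (hIFp x) (hIFp a)]
      _ ≤ ∫ t in Ioi (0:ℝ), (wp (Fp x t) - wp (Fp a t)) :=
          setIntegral_mono_on (((hIFp x).sub (hIFp a)).const_mul κ)
            ((hIp x).sub (hIp a)) measurableSet_Ioi h1
      _ = (∫ t in Ioi (0:ℝ), wp (Fp x t)) - ∫ t in Ioi (0:ℝ), wp (Fp a t) :=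
          integral_sub (hIp x) (hIp a)
  have I2 : κ * ((∫ t in Ioi (0:ℝ), Fm a t) - ∫ t in Ioi (0:ℝ), Fm x t)
      ≤ (∫ t in Ioi (0:ℝ), wm (Fm a t)) - ∫ t in Ioi (0:ℝ), wm (Fm x t) := by
    calc κ * ((∫ t in Ioi (0:ℝ), Fm a t) - ∫ t in Ioi (0:ℝ), Fm x t)
        = ∫ t in Ioi (0:ℝ), κ * (Fm a t - Fm x t) := by
          rw [integral_const_mul, integral_sub (hIFm a) (hIFm x)]
      _ ≤ ∫ t in Ioi (0:ℝ), (wm (Fm a t) - wm (Fm x t)) :=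
          setIntegral_mono_on (((hIFm a).sub (hIFm x)).const_mul κ)
            ((hIm a).sub (hIm x)) measurableSet_Ioi h2
      _ = (∫ t in Ioi (0:ℝ), wm (Fm a t)) - ∫ t in Ioi (0:ℝ), wm (Fm x t) :=
          integral_sub (hIm a) (hIm x)
  -- Layer cake for both shifts
  have hZm : ∀ c : ℝ, Measurable fun ω => v (ξ ω - c) := fun c =>
    hvm.monotone.measurable.comp (hξm.sub measurable_const)
  have hZb : ∀ (c : ℝ) (ω : Ω), |v (ξ ω - c)| ≤ max |v (M - c)| |v (-M - c)| := by
    intro c ω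
    rw [abs_le]
    constructor
    · have h1 : v (-M - c) ≤ v (ξ ω - c) :=
        hvm.monotone (by have := (abs_le.mp (hM ω)).1; linarith)
      have h2 : -|v (-M - c)| ≤ v (-M - c) := neg_abs_le _
      have h3 : |v (-M - c)| ≤ max |v (M - c)| |v (-M - c)| := le_max_right _ _
      linarith
    · have h1 : v (ξ ω - c) ≤ v (M - c) :=
        hvm.monotone (by have := (abs_le.mp (hM ω)).2; linarith)
      have h2 : v (M - c) ≤ |v (M - c)| := le_abs_self _
      have h3 : |v (M - c)| ≤ max |v (M - c)| |v (-M - c)| := le_max_left _ _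
      linarith
  have hLC : ∀ c : ℝ, (∫ t in Ioi (0:ℝ), Fp c t) - (∫ t in Ioi (0:ℝ), Fm c t)
      = ∫ ω, v (ξ ω - c) ∂P := fun c =>
    tail_integral_eq P _ (hZm c) _ (hZb c)
  -- Strict positivity of the expectation gap
  have hZint : ∀ c : ℝ, Integrable (fun ω => v (ξ ω - c)) P := fun c =>
    ⟨(hZm c).aestronglyMeasurable,
      HasFiniteIntegral.of_bounded (C := max |v (M - c)| |v (-M - c)|)
        (Filter.Eventually.of_forall fun ω => by
          rw [Real.norm_eq_abs]; exact hZb c ω)⟩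
  have hposgap : 0 < (∫ ω, v (ξ ω - x) ∂P) - ∫ ω, v (ξ ω - a) ∂P := by
    rw [← integral_sub (hZint x) (hZint a)]
    have hptpos : ∀ ω, 0 < v (ξ ω - x) - v (ξ ω - a) := fun ω =>
      sub_pos.mpr (hvm (by linarith))
    rw [integral_pos_iff_support_of_nonneg_ae
      (Filter.Eventually.of_forall fun ω => (hptpos ω).le)
      ((hZint x).sub (hZint a))]
    have : Function.support (fun ω => v (ξ ω - x) - v (ξ ω - a)) = univ := by
      ext ω; simp [Function.mem_support, (hptpos ω).ne']
    rw [this]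
    simp
  -- Conclusion
  have hcEa : cptE P v wm wp (fun ω => ξ ω - a)
      = (∫ t in Ioi (0:ℝ), wp (Fp a t)) - ∫ t in Ioi (0:ℝ), wm (Fm a t) := rfl
  have hcEx : cptE P v wm wp (fun ω => ξ ω - x)
      = (∫ t in Ioi (0:ℝ), wp (Fp x t)) - ∫ t in Ioi (0:ℝ), wm (Fm x t) := rfl
  rw [mem_setOf_eq, hcEx] at hx
  rw [hcEa] at hE
  have hLCx := hLC x
  have hLCa := hLC a
  nlinarith [mul_pos hκ hposgap]
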